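/- Let π be a probability measure on ℝ with inf supp(π) < 0 < sup supp(π), and fix d > 0. Then the function u ↦ G(u,d) is twice differentiable on (m(π), M(π)) and for every u ∈ (m(π), M(π)) its second derivative equals the reciprocal of the variance of the tilted measure: ∂²G/∂u²(u,d) = 1 / Var_{X ∼ π^{(h(u,d),d)}}(X), which is strictly positive. -/

import Mathlib

open MeasureTheory ProbabilityTheory Filter Set
open scoped NNReal ENNReal

/-- The (topological) support of a measure on `ℝ`: points all of whose neighborhoods
have positive measure. -/
def msupp (pr : MeasureTheory.Measure ℝ) : Set ℝ := {x : ℝ | ∀ U ∈ nhds x, pr U ≠ 0}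

/-- The cumulant generating function `c(γ₁, γ₂) = log ∫ exp(γ₁ x - γ₂/2 x²) dπ(x)`. -/
noncomputable def cgf (pr : MeasureTheory.Measure ℝ) (γ₁ γ₂ : ℝ) : ℝ :=
  Real.log (∫ x, Real.exp (γ₁ * x - γ₂ / 2 * x ^ 2) ∂pr)

/-- The exponentially tilted measure `π^{(γ₁, γ₂)}`, with density
`exp(γ₁ x - γ₂/2 x² - c(γ₁,γ₂))` with respect to `π`. -/
noncomputable def tilt (pr : MeasureTheory.Measure ℝ) (γ₁ γ₂ : ℝ) : MeasureTheory.Measure ℝ :=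
  pr.withDensity fun x => ENNReal.ofReal (Real.exp (γ₁ * x - γ₂ / 2 * x ^ 2 - cgf pr γ₁ γ₂))

/-- The mean of the tilted measure `π^{(γ₁, γ₂)}`. -/
noncomputable def tiltMean (pr : MeasureTheory.Measure ℝ) (γ₁ γ₂ : ℝ) : ℝ :=
  ∫ x, x ∂(tilt pr γ₁ γ₂)

/-- with `h(·,d)` the (unique) tilt parameter matching a prescribed mean,
the function `G(·,d) : u ↦ u·h(u,d) − c(h(u,d),d) + c(0,d)` is twice differentiable on
`(m(π), M(π))` and its second derivative at `u` equals the reciprocal of the variance of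
the tilted measure `π^{(h(u,d),d)}`, which is strictly positive. -/

noncomputable def A (pr : MeasureTheory.Measure ℝ) (d γ : ℝ) : ℝ :=
  ∫ x, Real.exp (γ * x - d / 2 * x ^ 2) ∂pr

lemma key_bd {d : ℝ} (hd : 0 < d) (b x : ℝ) : b * |x| - d / 2 * x ^ 2 ≤ b ^ 2 / (2 * d) := by
  rw [le_div_iff₀ (by positivity)]
  have h2 : d ^ 2 * x ^ 2 - 2 * d * |x| * b + b ^ 2 ≥ 0 := by
    nlinarith [sq_nonneg (d * |x| - b), sq_abs x]
  nlinarith [h2]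

lemma abs_pow_mul_exp_le {d : ℝ} (hd : 0 < d) (n : ℕ) {γ₀ γ : ℝ} (hγ : |γ - γ₀| ≤ 1) (x : ℝ) :
    |x ^ n * Real.exp (γ * x - d / 2 * x ^ 2)| ≤ Real.exp ((|γ₀| + 1 + n) ^ 2 / (2 * d)) := by
  have h1 : |x| ≤ Real.exp |x| := (le_add_of_nonneg_left zero_le_one).trans
    (by linarith [Real.add_one_le_exp |x|])
  have h2 : |x| ^ n ≤ Real.exp (n * |x|) := by
    calc |x| ^ n ≤ (Real.exp |x|) ^ n := pow_le_pow_left₀ (abs_nonneg x) h1 n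
    _ = Real.exp (n * |x|) := by rw [← Real.exp_nat_mul]
  have hγ' : |γ| ≤ |γ₀| + 1 := by
    have := abs_sub_abs_le_abs_sub γ γ₀
    linarith
  calc |x ^ n * Real.exp (γ * x - d / 2 * x ^ 2)|
      = |x| ^ n * Real.exp (γ * x - d / 2 * x ^ 2) := by
        rw [abs_mul, abs_pow, abs_of_pos (Real.exp_pos _)]
    _ ≤ Real.exp (n * |x|) * Real.exp (γ * x - d / 2 * x ^ 2) := by
        exact mul_le_mul_of_nonneg_right h2 (Real.exp_pos _).le
    _ = Real.exp (n * |x| + (γ * x - d / 2 * x ^ 2)) := by rw [← Real.exp_add]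
    _ ≤ Real.exp ((|γ₀| + 1 + n) ^ 2 / (2 * d)) := by
        apply Real.exp_le_exp.2
        have hx : γ * x ≤ |γ| * |x| := le_trans (le_abs_self _) (by rw [abs_mul])
        have : (|γ₀| + 1 + n) * |x| - d / 2 * x ^ 2 ≤ (|γ₀| + 1 + n) ^ 2 / (2 * d) :=
          key_bd hd _ x
        nlinarith [abs_nonneg x]

lemma cont_pow_mul_exp (d γ : ℝ) (n : ℕ) :
    Continuous (fun x : ℝ => x ^ n * Real.exp (γ * x - d / 2 * x ^ 2)) := by
  fun_prop

lemma integrable_pow_mul_exp (pr : Measure ℝ) [IsProbabilityMeasure pr] {d : ℝ} (hd : 0 < d)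
    (n : ℕ) (γ : ℝ) : Integrable (fun x => x ^ n * Real.exp (γ * x - d / 2 * x ^ 2)) pr := by
  apply Integrable.mono' (integrable_const (Real.exp ((|γ| + 1 + n) ^ 2 / (2 * d))))
    ((cont_pow_mul_exp d γ n).aestronglyMeasurable)
  filter_upwards with x
  exact abs_pow_mul_exp_le hd n (by simp) x

lemma A_pos (pr : Measure ℝ) [IsProbabilityMeasure pr] {d : ℝ} (hd : 0 < d) (γ : ℝ) :
    0 < A pr d γ := by
  rw [A, integral_pos_iff_support_of_nonneg_ae
    (by filter_upwards with x using (Real.exp_pos _).le)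
    (by simpa using integrable_pow_mul_exp pr hd 0 γ)]
  have hsupp : (Function.support fun x => Real.exp (γ * x - d / 2 * x ^ 2)) = Set.univ := by
    ext x; simp [Function.mem_support, Real.exp_ne_zero]
  rw [hsupp]
  simp

lemma exp_cgf (pr : Measure ℝ) [IsProbabilityMeasure pr] {d : ℝ} (hd : 0 < d) (γ : ℝ) :
    Real.exp (cgf pr γ d) = A pr d γ :=
  Real.exp_log (A_pos pr hd γ)

lemma tilt_eq_withDensity_nnreal (pr : Measure ℝ) (γ d : ℝ) :
    tilt pr γ d = pr.withDensity
      (fun x => ((Real.toNNReal (Real.exp (γ * x - d / 2 * x ^ 2 - cgf pr γ d)) : ℝ≥0) : ℝ≥0∞)) := by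
  rfl

lemma meas_density (pr : Measure ℝ) (γ d : ℝ) :
    Measurable (fun x => Real.toNNReal (Real.exp (γ * x - d / 2 * x ^ 2 - cgf pr γ d))) := by
  apply Measurable.real_toNNReal
  fun_prop

lemma integral_tilt (pr : Measure ℝ) [IsProbabilityMeasure pr] {d : ℝ} (hd : 0 < d) (γ : ℝ)
    (g : ℝ → ℝ) :
    ∫ x, g x ∂(tilt pr γ d) =
      (∫ x, g x * Real.exp (γ * x - d / 2 * x ^ 2) ∂pr) / A pr d γ := by
  rw [tilt_eq_withDensity_nnreal, integral_withDensity_eq_integral_smul (meas_density pr γ d) g]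
  rw [eq_div_iff (A_pos pr hd γ).ne', ← integral_mul_const]
  apply integral_congr_ae
  filter_upwards with x
  have h1 : ((Real.toNNReal (Real.exp (γ * x - d / 2 * x ^ 2 - cgf pr γ d)) : ℝ≥0) : ℝ)
      = Real.exp (γ * x - d / 2 * x ^ 2 - cgf pr γ d) :=
    Real.coe_toNNReal _ (Real.exp_pos _).le
  have hA := (A_pos pr hd γ).ne'
  rw [NNReal.smul_def, smul_eq_mul, h1, Real.exp_sub, exp_cgf pr hd γ]
  field_simp

lemma tilt_isProb (pr : Measure ℝ) [IsProbabilityMeasure pr] {d : ℝ} (hd : 0 < d) (γ : ℝ) :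
    IsProbabilityMeasure (tilt pr γ d) := by
  constructor
  rw [tilt, withDensity_apply _ MeasurableSet.univ, Measure.restrict_univ]
  have hint : Integrable (fun x => Real.exp (γ * x - d / 2 * x ^ 2 - cgf pr γ d)) pr := by
    have := (integrable_pow_mul_exp pr hd 0 γ).mul_const (Real.exp (- cgf pr γ d))
    apply this.congr
    filter_upwards with x
    simp [Real.exp_sub, Real.exp_neg, div_eq_mul_inv]
  rw [← ofReal_integral_eq_lintegral_ofReal hint
    (by filter_upwards with x using (Real.exp_pos _).le)]
  have : ∫ x, Real.exp (γ * x - d / 2 * x ^ 2 - cgf pr γ d) ∂pr = 1 := by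
    have h2 : ∀ x : ℝ, Real.exp (γ * x - d / 2 * x ^ 2 - cgf pr γ d)
        = Real.exp (γ * x - d / 2 * x ^ 2) / A pr d γ := by
      intro x; rw [Real.exp_sub, exp_cgf pr hd γ]
    simp only [h2]
    rw [integral_div]
    rw [div_eq_one_iff_eq (A_pos pr hd γ).ne']
    rfl
  rw [this]
  simp

lemma tiltMean_eq (pr : Measure ℝ) [IsProbabilityMeasure pr] {d : ℝ} (hd : 0 < d) (γ : ℝ) :
    tiltMean pr γ d = (∫ x, x * Real.exp (γ * x - d / 2 * x ^ 2) ∂pr) / A pr d γ :=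
  integral_tilt pr hd γ (fun x => x)

lemma hasDerivAt_param (d x γ : ℝ) :
    HasDerivAt (fun γ : ℝ => Real.exp (γ * x - d / 2 * x ^ 2))
      (x * Real.exp (γ * x - d / 2 * x ^ 2)) γ := by
  have h : HasDerivAt (fun γ : ℝ => γ * x - d / 2 * x ^ 2) x γ :=
    (hasDerivAt_mul_const x).sub_const _
  simpa [mul_comm] using h.exp

lemma hasDerivAt_A (pr : Measure ℝ) [IsProbabilityMeasure pr] {d : ℝ} (hd : 0 < d) (γ₀ : ℝ) :
    HasDerivAt (fun γ => A pr d γ)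
      (∫ x, x * Real.exp (γ₀ * x - d / 2 * x ^ 2) ∂pr) γ₀ := by
  have := (hasDerivAt_integral_of_dominated_loc_of_deriv_le (μ := pr)
    (F := fun γ x => Real.exp (γ * x - d / 2 * x ^ 2))
    (F' := fun γ x => x * Real.exp (γ * x - d / 2 * x ^ 2))
    (bound := fun _ => Real.exp ((|γ₀| + 1 + 1) ^ 2 / (2 * d)))
    (x₀ := γ₀) (Metric.ball_mem_nhds γ₀ one_pos)
    (Filter.Eventually.of_forall fun γ => (cont_pow_mul_exp d γ 0).aestronglyMeasurable.congr
      (by filter_upwards with x; simp))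
    (by simpa using integrable_pow_mul_exp pr hd 0 γ₀)
    ((cont_pow_mul_exp d γ₀ 1).aestronglyMeasurable.congr
      (by filter_upwards with x; simp))
    (by
      filter_upwards with x γ hγ
      have : |γ - γ₀| ≤ 1 := le_of_lt (by simpa [Real.dist_eq] using hγ)
      have h := abs_pow_mul_exp_le hd 1 this x
      rw [abs_mul, abs_of_pos (Real.exp_pos _), pow_one] at h
      simpa using h)
    (integrable_const _)
    (by filter_upwards with x γ _ using hasDerivAt_param d x γ))
  exact this.2

lemma hasDerivAt_A1 (pr : Measure ℝ) [IsProbabilityMeasure pr] {d : ℝ} (hd : 0 < d) (γ₀ : ℝ) :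
    HasDerivAt (fun γ => ∫ x, x * Real.exp (γ * x - d / 2 * x ^ 2) ∂pr)
      (∫ x, x ^ 2 * Real.exp (γ₀ * x - d / 2 * x ^ 2) ∂pr) γ₀ := by
  have := (hasDerivAt_integral_of_dominated_loc_of_deriv_le (μ := pr)
    (F := fun γ x => x * Real.exp (γ * x - d / 2 * x ^ 2))
    (F' := fun γ x => x ^ 2 * Real.exp (γ * x - d / 2 * x ^ 2))
    (bound := fun _ => Real.exp ((|γ₀| + 1 + 2) ^ 2 / (2 * d)))
    (x₀ := γ₀) (Metric.ball_mem_nhds γ₀ one_pos)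
    (Filter.Eventually.of_forall fun γ => (cont_pow_mul_exp d γ 1).aestronglyMeasurable.congr
      (by filter_upwards with x; simp))
    (by simpa using integrable_pow_mul_exp pr hd 1 γ₀)
    ((cont_pow_mul_exp d γ₀ 2).aestronglyMeasurable.congr
      (by filter_upwards with x; simp))
    (by
      filter_upwards with x γ hγ
      have : |γ - γ₀| ≤ 1 := le_of_lt (by simpa [Real.dist_eq] using hγ)
      have h := abs_pow_mul_exp_le hd 2 this x
      rw [abs_mul, abs_of_pos (Real.exp_pos _), abs_pow, sq_abs] at h
      simpa using h)
    (integrable_const _)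
    (by
      filter_upwards with x γ _
      have h := (hasDerivAt_param d x γ).const_mul x
      convert h using 1
      · rfl
      ring))
  exact this.2

lemma hasDerivAt_cgf (pr : Measure ℝ) [IsProbabilityMeasure pr] {d : ℝ} (hd : 0 < d) (γ : ℝ) :
    HasDerivAt (fun γ => cgf pr γ d) (tiltMean pr γ d) γ := by
  have h := (hasDerivAt_A pr hd γ).log (A_pos pr hd γ).ne'
  rw [← tiltMean_eq pr hd γ] at h
  exact h

lemma memLp_tilt (pr : Measure ℝ) [IsProbabilityMeasure pr] {d : ℝ} (hd : 0 < d) (γ : ℝ) :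
    MemLp id 2 (tilt pr γ d) := by
  rw [memLp_two_iff_integrable_sq aestronglyMeasurable_id]
  rw [tilt_eq_withDensity_nnreal,
    integrable_withDensity_iff_integrable_smul (meas_density pr γ d)]
  have hint := (integrable_pow_mul_exp pr hd 2 γ).mul_const
    (Real.exp (- cgf pr γ d))
  apply hint.congr
  filter_upwards with x
  have h1 : ((Real.toNNReal (Real.exp (γ * x - d / 2 * x ^ 2 - cgf pr γ d)) : ℝ≥0) : ℝ)
      = Real.exp (γ * x - d / 2 * x ^ 2 - cgf pr γ d) :=
    Real.coe_toNNReal _ (Real.exp_pos _).le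
  rw [NNReal.smul_def, smul_eq_mul, h1,
    show γ * x - d / 2 * x ^ 2 - _root_.cgf pr γ d
      = (γ * x - d / 2 * x ^ 2) + (- _root_.cgf pr γ d) by ring, Real.exp_add]
  simp only [id_eq]
  ring

lemma variance_tilt_eq (pr : Measure ℝ) [IsProbabilityMeasure pr] {d : ℝ} (hd : 0 < d) (γ : ℝ) :
    variance id (tilt pr γ d) =
      (∫ x, x ^ 2 * Real.exp (γ * x - d / 2 * x ^ 2) ∂pr) / A pr d γ - (tiltMean pr γ d) ^ 2 := by
  haveI := tilt_isProb pr hd γ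
  rw [variance_eq_sub (memLp_tilt pr hd γ)]
  have h1 : ∫ x, (id x) ^ 2 ∂(tilt pr γ d)
      = (∫ x, x ^ 2 * Real.exp (γ * x - d / 2 * x ^ 2) ∂pr) / A pr d γ := by
    simpa using integral_tilt pr hd γ (fun x => x ^ 2)
  have h2 : ∫ x, id x ∂(tilt pr γ d) = tiltMean pr γ d := rfl
  simp only [Pi.pow_apply]
  rw [h1, h2]

lemma hasDerivAt_tiltMean (pr : Measure ℝ) [IsProbabilityMeasure pr] {d : ℝ} (hd : 0 < d)
    (γ : ℝ) :
    HasDerivAt (fun γ => tiltMean pr γ d) (variance id (tilt pr γ d)) γ := by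
  have hA := A_pos pr hd γ
  have h := (hasDerivAt_A1 pr hd γ).div (hasDerivAt_A pr hd γ) hA.ne'
  have heq : (fun γ => (∫ x, x * Real.exp (γ * x - d / 2 * x ^ 2) ∂pr) / A pr d γ)
      = fun γ => tiltMean pr γ d := by
    funext γ; rw [tiltMean_eq pr hd γ]
  change HasDerivAt (fun γ => (∫ x, x * Real.exp (γ * x - d / 2 * x ^ 2) ∂pr) / A pr d γ) _ γ at h
  rw [heq] at h
  convert h using 1
  rw [variance_tilt_eq pr hd γ, tiltMean_eq pr hd γ]
  set I1 := ∫ x, x * Real.exp (γ * x - d / 2 * x ^ 2) ∂pr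
  set I2 := ∫ x, x ^ 2 * Real.exp (γ * x - d / 2 * x ^ 2) ∂pr
  field_simp

lemma variance_tilt_pos (pr : Measure ℝ) [IsProbabilityMeasure pr]
    (hneg : ∃ x ∈ msupp pr, x < 0) (hpos : ∃ x ∈ msupp pr, 0 < x)
    {d : ℝ} (hd : 0 < d) (γ : ℝ) :
    0 < variance id (tilt pr γ d) := by
  haveI := tilt_isProb pr hd γ
  set m := tiltMean pr γ d with hm
  have hveq : variance id (tilt pr γ d)
      = (∫ x, (x - m) ^ 2 * Real.exp (γ * x - d / 2 * x ^ 2) ∂pr) / A pr d γ := by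
    rw [variance_eq_integral (memLp_tilt pr hd γ).aemeasurable]
    change ∫ ω, (id ω - m) ^ 2 ∂(tilt pr γ d) = _
    have := integral_tilt pr hd γ (fun x => (x - m) ^ 2)
    simpa using this
  rw [hveq]
  apply div_pos _ (A_pos pr hd γ)
  have hint : Integrable (fun x => (x - m) ^ 2 * Real.exp (γ * x - d / 2 * x ^ 2)) pr := by
    have h0 := (integrable_pow_mul_exp pr hd 0 γ).const_mul (m ^ 2)
    have h1 := (integrable_pow_mul_exp pr hd 1 γ).const_mul (2 * m)
    have h2 := integrable_pow_mul_exp pr hd 2 γ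
    apply ((h2.sub h1).add h0).congr
    filter_upwards with x
    simp only [Pi.add_apply, Pi.sub_apply, pow_zero, pow_one, one_mul]
    ring
  rw [integral_pos_iff_support_of_nonneg_ae
    (by filter_upwards with x using mul_nonneg (sq_nonneg _) (Real.exp_pos _).le) hint]
  -- support is {x | x ≠ m}
  have hsupp : (Function.support fun x => (x - m) ^ 2 * Real.exp (γ * x - d / 2 * x ^ 2))
      = {m}ᶜ := by
    ext x
    simp only [Function.mem_support, mem_compl_iff, mem_singleton_iff]
    constructor
    · intro hx hxm; apply hx; rw [hxm]; simp
    · intro hx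
      have : x - m ≠ 0 := sub_ne_zero.2 hx
      positivity
  rw [hsupp]
  -- some support point differs from m
  obtain ⟨xn, hxn, hxn0⟩ := hneg
  obtain ⟨xp, hxp, hxp0⟩ := hpos
  have key : ∃ x₀ ∈ msupp pr, x₀ ≠ m := by
    by_cases hc : xn = m
    · exact ⟨xp, hxp, fun hh => by rw [hh, ← hc] at hxp0; linarith⟩
    · exact ⟨xn, hxn, hc⟩
  obtain ⟨x₀, hx₀, hx₀m⟩ := key
  have hball : Metric.ball x₀ (|x₀ - m|) ⊆ {m}ᶜ := by
    intro y hy hym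
    rw [mem_singleton_iff] at hym
    subst hym
    rw [Metric.mem_ball, Real.dist_eq] at hy
    rw [abs_sub_comm] at hy
    exact lt_irrefl _ hy
  have hb : pr (Metric.ball x₀ (|x₀ - m|)) ≠ 0 :=
    hx₀ _ (Metric.ball_mem_nhds x₀ (by simpa [abs_pos] using sub_ne_zero.2 hx₀m))
  calc (0 : ℝ≥0∞) < pr (Metric.ball x₀ (|x₀ - m|)) := pos_iff_ne_zero.2 hb
    _ ≤ pr {m}ᶜ := measure_mono hball

lemma isOpen_I (pr : Measure ℝ) :
    IsOpen {v : ℝ | (∃ x ∈ msupp pr, x < v) ∧ (∃ x ∈ msupp pr, v < x)} := by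
  apply IsOpen.inter (s := {v : ℝ | ∃ x ∈ msupp pr, x < v})
    (t := {v : ℝ | ∃ x ∈ msupp pr, v < x})
  · rw [isOpen_iff_mem_nhds]
    rintro v ⟨x, hx, hxv⟩
    filter_upwards [Ioi_mem_nhds hxv] with w hw
    exact ⟨x, hx, hw⟩
  · rw [isOpen_iff_mem_nhds]
    rintro v ⟨x, hx, hxv⟩
    filter_upwards [Iio_mem_nhds hxv] with w hw
    exact ⟨x, hx, hw⟩

theorem stmt4 (pr : Measure ℝ) [IsProbabilityMeasure pr]
    (hneg : ∃ x ∈ msupp pr, x < 0) (hpos : ∃ x ∈ msupp pr, 0 < x)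
    (d : ℝ) (hd : 0 < d) (h : ℝ → ℝ)
    (hh : ∀ u : ℝ, (∃ x ∈ msupp pr, x < u) → (∃ x ∈ msupp pr, u < x) →
      tiltMean pr (h u) d = u)
    (u : ℝ) (hul : ∃ x ∈ msupp pr, x < u) (huu : ∃ x ∈ msupp pr, u < x) :
    DifferentiableAt ℝ (fun v => v * h v - cgf pr (h v) d + cgf pr 0 d) u ∧
    HasDerivAt (deriv (fun v => v * h v - cgf pr (h v) d + cgf pr 0 d))
      (1 / ProbabilityTheory.variance id (tilt pr (h u) d)) u ∧
    0 < 1 / ProbabilityTheory.variance id (tilt pr (h u) d) := by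
  set I : Set ℝ := {v : ℝ | (∃ x ∈ msupp pr, x < v) ∧ (∃ x ∈ msupp pr, v < x)} with hI
  have hIopen : IsOpen I := isOpen_I pr
  have hHH : ∀ v ∈ I, tiltMean pr (h v) d = v := fun v hv => hh v hv.1 hv.2
  have huI : u ∈ I := ⟨hul, huu⟩
  have hvarpos : ∀ γ : ℝ, 0 < variance id (tilt pr γ d) :=
    fun γ => variance_tilt_pos pr hneg hpos hd γ
  have hTmono : StrictMono (fun γ => tiltMean pr γ d) :=
    strictMono_of_hasDerivAt_pos (fun γ => hasDerivAt_tiltMean pr hd γ) hvarpos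
  -- continuity of h on I
  have hcont : ∀ v ∈ I, ContinuousAt h v := by
    intro v hv
    rw [ContinuousAt, Metric.tendsto_nhds]
    intro ε hε
    have ha : tiltMean pr (h v - ε) d < v := by
      have := hTmono (show h v - ε < h v by linarith)
      simp only at this
      rwa [hHH v hv] at this
    have hb : v < tiltMean pr (h v + ε) d := by
      have := hTmono (show h v < h v + ε by linarith)
      simp only at this
      rwa [hHH v hv] at this
    filter_upwards [hIopen.mem_nhds hv, Ioo_mem_nhds ha hb] with w hwI hwab
    rw [Real.dist_eq, abs_sub_lt_iff]
    constructor
    · by_contra hcon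
      push_neg at hcon
      have : tiltMean pr (h v + ε) d ≤ tiltMean pr (h w) d := hTmono.le_iff_le.2 (by linarith)
      rw [hHH w hwI] at this
      exact absurd hwab.2 (by linarith)
    · by_contra hcon
      push_neg at hcon
      have : tiltMean pr (h w) d ≤ tiltMean pr (h v - ε) d := hTmono.le_iff_le.2 (by linarith)
      rw [hHH w hwI] at this
      exact absurd hwab.1 (by linarith)
  -- derivative of h on I
  have hder : ∀ v ∈ I, HasDerivAt h (variance id (tilt pr (h v) d))⁻¹ v := by
    intro v hv
    apply HasDerivAt.of_local_left_inverse (hcont v hv)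
      (hasDerivAt_tiltMean pr hd (h v)) (hvarpos (h v)).ne'
    filter_upwards [hIopen.mem_nhds hv] with w hw using hHH w hw
  -- derivative of G on I
  have hG : ∀ v ∈ I, HasDerivAt (fun v => v * h v - cgf pr (h v) d + cgf pr 0 d) (h v) v := by
    intro v hv
    have h1 : HasDerivAt (fun v => v * h v) (1 * h v + v * (variance id (tilt pr (h v) d))⁻¹) v :=
      (hasDerivAt_id v).mul (hder v hv)
    have h2 : HasDerivAt (fun v => cgf pr (h v) d)
        (tiltMean pr (h v) d * (variance id (tilt pr (h v) d))⁻¹) v :=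
      (hasDerivAt_cgf pr hd (h v)).comp v (hder v hv)
    have h3 := (h1.sub h2).add_const (cgf pr 0 d)
    convert h3 using 1
    · rfl
    · rfl
    · rfl
    rw [hHH v hv]
    ring
  refine ⟨(hG u huI).differentiableAt, ?_, ?_⟩
  · have heq : deriv (fun v => v * h v - cgf pr (h v) d + cgf pr 0 d) =ᶠ[nhds u] h := by
      filter_upwards [hIopen.mem_nhds huI] with w hw using (hG w hw).deriv
    have := (hder u huI).congr_of_eventuallyEq heq
    simpa [one_div] using this
  · rw [one_div]
    exact inv_pos.2 (hvarpos (h u))
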